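/- arXiv:2604.13524 — 4 statements merged into one kernel-verified Lean document; each statement's English description precedes it below -/
import Mathlib

section
/- Let ε ∈ [0,1), M > 1, and let 𝓟 and 𝓔 be sets of density matrices on ℂ^d such that conv(𝓟) ∩ aff(𝓔) ≠ ∅. Then there exists a linear map L from d×d complex matrices to 2×2 complex matrices satisfying T(L(ρ), |1⟩⟨1|) ≤ ε for all ρ ∈ 𝓟 and L(τ) = π_M for all τ ∈ 𝓔, if and only if ε ≥ 1 − 1/M. -/
open Matrix ComplexOrder

/-- Trace norm of a complex matrix: the trace of `sqrt(AᴴA)` (sum of singular values). -/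
noncomputable def traceNorm {n : Type*} [Fintype n] [DecidableEq n]
    (A : Matrix n n ℂ) : ℝ :=
  (((Matrix.posSemidef_conjTranspose_mul_self A).1.eigenvectorUnitary.1 *
      diagonal (((↑) : ℝ → ℂ) ∘ (√·) ∘ (Matrix.posSemidef_conjTranspose_mul_self A).1.eigenvalues) *
      (star (Matrix.posSemidef_conjTranspose_mul_self A).1.eigenvectorUnitary :
        Matrix n n ℂ)).trace).re

/-- Trace distance `T(X,Y) = ‖X - Y‖₁ / 2`. -/
noncomputable def traceDist {n : Type*} [Fintype n] [DecidableEq n]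
    (X Y : Matrix n n ℂ) : ℝ :=
  traceNorm (X - Y) / 2

/-- A density matrix: positive semidefinite with unit trace. -/
def IsDensityMatrix {n : Type*} [Fintype n] (ρ : Matrix n n ℂ) : Prop :=
  ρ.PosSemidef ∧ ρ.trace = 1

/-- The battery Gibbs state `π_M = diag(1 - 1/M, 1/M)`. -/
noncomputable def piM (M : ℝ) : Matrix (Fin 2) (Fin 2) ℂ :=
  Matrix.diagonal ![((1 - 1/M : ℝ) : ℂ), ((1/M : ℝ) : ℂ)]

/-- The excited battery state `|1⟩⟨1| = diag(0,1)`. -/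
def ket1 : Matrix (Fin 2) (Fin 2) ℂ :=
  Matrix.diagonal ![0, 1]

/-- A test (POVM effect): `0 ≤ E ≤ I`. -/
def IsTest {n : Type*} [Fintype n] [DecidableEq n] (E : Matrix n n ℂ) : Prop :=
  E.PosSemidef ∧ (1 - E).PosSemidef

/-- Choi matrix `Σ_{ij} E_{ij} ⊗ F(E_{ij})` of a linear map on matrices. -/
noncomputable def choiMatrix {n m : Type*} [Fintype n] [DecidableEq n] [Fintype m]
    (F : Matrix n n ℂ →ₗ[ℂ] Matrix m m ℂ) :
    Matrix (n × m) (n × m) ℂ :=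
  fun p q => F (Matrix.single p.1 q.1 1) p.2 q.2

/-- Completely positive (positive semidefinite Choi matrix) and trace preserving. -/
def IsCPTP {n m : Type*} [Fintype n] [DecidableEq n] [Fintype m]
    (F : Matrix n n ℂ →ₗ[ℂ] Matrix m m ℂ) : Prop :=
  (choiMatrix F).PosSemidef ∧ ∀ X, (F X).trace = X.trace

/-- `n`-fold Kronecker (tensor) power of a `2 × 2` matrix, indexed by bit strings. -/
def tensPow (A : Matrix (Fin 2) (Fin 2) ℂ) (n : ℕ) :
    Matrix (Fin n → Fin 2) (Fin n → Fin 2) ℂ :=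
  fun x y => ∏ i, A (x i) (y i)

/-- `ε`-ball (in trace distance) of density matrices around a set `𝓟`. -/
noncomputable def metBall {n : Type*} [Fintype n] [DecidableEq n]
    (ε : ℝ) (P : Set (Matrix n n ℂ)) : Set (Matrix n n ℂ) :=
  {ω | IsDensityMatrix ω ∧ ∃ ρ ∈ P, traceDist ω ρ ≤ ε}

lemma psd_trace_nonneg {n : Type*} [Fintype n] [DecidableEq n]
    {S : Matrix n n ℂ} (hS : S.PosSemidef) : 0 ≤ S.trace := by
  have h : ∀ i, 0 ≤ S i i := by
    intro i
    exact hS.diag_nonneg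
  exact Finset.sum_nonneg fun i _ => h i

lemma psd_det_eq {n : Type*} [Fintype n] [DecidableEq n]
    {S : Matrix n n ℂ} (hS : S.PosSemidef) :
    ∃ r : ℝ, 0 ≤ r ∧ S.det = (r : ℂ) := by
  refine ⟨∏ i, hS.1.eigenvalues i, Finset.prod_nonneg fun i _ => hS.eigenvalues_nonneg i, ?_⟩
  rw [hS.1.det_eq_prod_eigenvalues]
  push_cast
  rfl

open scoped MatrixOrder in
lemma sqrt_spec {n : Type*} [Fintype n] [DecidableEq n] (A : Matrix n n ℂ) :
    ∃ S : Matrix n n ℂ, S.PosSemidef ∧ S * S = Aᴴ * A ∧ traceNorm A = S.trace.re := by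
  have hP := Matrix.posSemidef_conjTranspose_mul_self A
  have hspec : ∀ x ∈ spectrum ℝ (Aᴴ * A), 0 ≤ x := by
    intro x hx
    rw [hP.1.spectrum_real_eq_range_eigenvalues] at hx
    obtain ⟨i, rfl⟩ := hx
    exact hP.eigenvalues_nonneg i
  refine ⟨cfc Real.sqrt (Aᴴ * A), ?_, ?_, ?_⟩
  · exact (cfc_nonneg (fun x _ => Real.sqrt_nonneg x)).posSemidef
  · rw [← cfc_mul Real.sqrt Real.sqrt (Aᴴ * A)]
    conv_rhs => rw [← cfc_id' ℝ (Aᴴ * A) hP.1.isSelfAdjoint]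
    exact cfc_congr (fun x hx => Real.mul_self_sqrt (hspec x hx))
  · rw [hP.1.cfc_eq, Matrix.IsHermitian.cfc, Unitary.conjStarAlgAut_apply]; rfl

lemma traceNorm_nonneg {n : Type*} [Fintype n] [DecidableEq n]
    (A : Matrix n n ℂ) : 0 ≤ traceNorm A := by
  obtain ⟨S, hS, -, hT⟩ := sqrt_spec A
  rw [hT]
  have := psd_trace_nonneg hS
  rw [Complex.le_def] at this
  exact this.1

lemma traceNorm_sq_fin_two (X : Matrix (Fin 2) (Fin 2) ℂ) :
    (traceNorm X)^2 = ((Xᴴ * X).trace).re + 2 * ‖X.det‖ := by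
  set hP := Matrix.posSemidef_conjTranspose_mul_self X with hPdef
  obtain ⟨S, hS, hmul, hT⟩ := sqrt_spec X
  have htr2 : S.trace * S.trace = (S * S).trace + 2 * S.det := by
    simp only [Matrix.trace_fin_two, Matrix.det_fin_two, Matrix.mul_apply,
      Fin.sum_univ_two]
    ring
  obtain ⟨r, hr, hrdet⟩ := psd_det_eq hS
  have hdetsq : (r : ℂ) * r = ((‖X.det‖ : ℝ) : ℂ) * (‖X.det‖ : ℝ) := by
    have h1 : S.det * S.det = (Xᴴ * X).det := by rw [← hmul, Matrix.det_mul]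
    rw [hrdet] at h1
    rw [h1, Matrix.det_mul, Matrix.det_conjTranspose]
    rw [Complex.star_def, mul_comm, Complex.mul_conj, Complex.normSq_eq_norm_sq]
    push_cast
    ring
  have hdet' : S.det = ((‖X.det‖ : ℝ) : ℂ) := by
    rw [hrdet]
    norm_cast
    nlinarith [norm_nonneg X.det, (by exact_mod_cast hdetsq : r * r = ‖X.det‖ * ‖X.det‖)]
  have htr : S.trace = ((S.trace.re : ℝ) : ℂ) := by
    have h0 := psd_trace_nonneg hS
    rw [Complex.le_def] at h0
    exact (Complex.ext_iff.mpr ⟨rfl, by simpa using h0.2.symm⟩)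
  have : traceNorm X = S.trace.re := hT
  rw [this]
  rw [hmul, hdet'] at htr2
  rw [htr] at htr2
  have := congrArg Complex.re htr2
  push_cast at this
  simpa [pow_two] using this

lemma entry_bound (X : Matrix (Fin 2) (Fin 2) ℂ) :
    ‖X 0 0 - X 1 1‖ ≤ traceNorm X := by
  set a := X 0 0; set b := X 0 1; set c := X 1 0; set d := X 1 1
  have h1 : ((Xᴴ * X).trace).re
      = ‖a‖^2 + ‖b‖^2 + ‖c‖^2 + ‖d‖^2 := by
    simp only [Matrix.trace_fin_two, Matrix.mul_apply, Fin.sum_univ_two,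
      Matrix.conjTranspose_apply, Complex.add_re, Complex.mul_re, Complex.star_def,
      Complex.conj_re, Complex.conj_im, Complex.sq_norm, Complex.normSq_apply]
    ring
  have h2 : X.det = a * d - b * c := Matrix.det_fin_two X
  have hsq : ‖a - d‖^2 ≤ (traceNorm X)^2 := by
    rw [traceNorm_sq_fin_two, h1, h2]
    have e1 : ‖a * d‖ ≤ ‖a * d - b * c‖ + ‖b * c‖ := by
      calc ‖a * d‖ = ‖(a * d - b * c) + b * c‖ := by ring_nf
        _ ≤ _ := norm_add_le _ _
    rw [norm_mul, norm_mul] at e1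
    have e3 : -(‖a‖ * ‖d‖) ≤ a.re * d.re + a.im * d.im := by
      have := Complex.abs_re_le_norm (a * (starRingEnd ℂ) d)
      rw [norm_mul, Complex.norm_conj] at this
      have h := neg_abs_le ((a * (starRingEnd ℂ) d).re)
      simp only [Complex.mul_re, Complex.conj_re, Complex.conj_im] at this h
      nlinarith [this, h]
    have eb : ‖b‖^2 = b.re^2 + b.im^2 := by
      rw [Complex.sq_norm, Complex.normSq_apply]; ring
    have ec : ‖c‖^2 = c.re^2 + c.im^2 := by
      rw [Complex.sq_norm, Complex.normSq_apply]; ring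
    have ead : ‖a-d‖^2 = (a.re-d.re)^2 + (a.im-d.im)^2 := by
      rw [Complex.sq_norm, Complex.normSq_apply]; simp [Complex.sub_re, Complex.sub_im]; ring
    have ea : ‖a‖^2 = a.re^2 + a.im^2 := by
      rw [Complex.sq_norm, Complex.normSq_apply]; ring
    have ed : ‖d‖^2 = d.re^2 + d.im^2 := by
      rw [Complex.sq_norm, Complex.normSq_apply]; ring
    nlinarith [e1, e3, eb, ec, ea, ed, ead, sq_nonneg (‖b‖ - ‖c‖)]
  calc ‖a - d‖ = Real.sqrt (‖a-d‖^2) :=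
        (Real.sqrt_sq (norm_nonneg _)).symm
    _ ≤ Real.sqrt ((traceNorm X)^2) := Real.sqrt_le_sqrt hsq
    _ = traceNorm X := Real.sqrt_sq (traceNorm_nonneg X)

lemma traceNorm_piM (M : ℝ) (hM : 1 < M) : traceNorm (piM M - ket1) = 2 - 2/M := by
  have hMpos : (0:ℝ) < M := lt_trans one_pos hM
  have h0 : (0:ℝ) ≤ 1 - 1/M := by
    rw [sub_nonneg]
    rw [div_le_one hMpos]; linarith
  have hsq := traceNorm_sq_fin_two (piM M - ket1)
  have e00 : (piM M - ket1) 0 0 = ((1 - 1/M : ℝ) : ℂ) := by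
    simp [piM, ket1, Matrix.sub_apply]
  have e11 : (piM M - ket1) 1 1 = ((1/M - 1 : ℝ) : ℂ) := by
    simp [piM, ket1, Matrix.sub_apply]
  have e01 : (piM M - ket1) 0 1 = 0 := by
    simp [piM, ket1, Matrix.sub_apply]
  have e10 : (piM M - ket1) 1 0 = 0 := by
    simp [piM, ket1, Matrix.sub_apply]
  rw [Matrix.trace_fin_two, Matrix.det_fin_two] at hsq
  simp only [Matrix.mul_apply, Fin.sum_univ_two, Matrix.conjTranspose_apply,
    e00, e01, e10, e11] at hsq
  simp only [Complex.star_def, Complex.conj_ofReal, map_zero] at hsq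
  have habs : ‖((1 - 1/M : ℝ):ℂ) * ((1/M - 1 : ℝ):ℂ) - 0 * 0‖
      = (1 - 1/M) * (1 - 1/M) := by
    rw [mul_zero, sub_zero, ← Complex.ofReal_mul, Complex.norm_real, Real.norm_eq_abs]
    rw [abs_eq_neg_self.mpr (by nlinarith)]
    ring
  rw [habs] at hsq
  simp only [mul_zero, zero_mul, add_zero, zero_add, Complex.add_re,
    ← Complex.ofReal_mul, Complex.ofReal_re] at hsq
  have hfin : (traceNorm (piM M - ket1))^2 = (2 - 2/M)^2 := by
    rw [hsq]; ring
  have hnn := traceNorm_nonneg (piM M - ket1)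
  have h2 : (0:ℝ) ≤ 2 - 2/M := by
    have he : (2:ℝ) - 2/M = 2*(1 - 1/M) := by ring
    linarith
  calc traceNorm (piM M - ket1) = Real.sqrt ((traceNorm (piM M - ket1))^2) :=
        (Real.sqrt_sq hnn).symm
    _ = Real.sqrt ((2 - 2/M)^2) := by rw [hfin]
    _ = 2 - 2/M := Real.sqrt_sq h2

/-- no-go theorem for work extraction into a clean battery under
Gibbs-preserving linear maps. -/
theorem stmt_2 {d : ℕ} (ε M : ℝ) (hε : ε ∈ Set.Ico (0:ℝ) 1) (hM : 1 < M)
    (𝓟 𝓔 : Set (Matrix (Fin d) (Fin d) ℂ))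
    (h𝓟 : ∀ ρ ∈ 𝓟, IsDensityMatrix ρ) (h𝓔 : ∀ τ ∈ 𝓔, IsDensityMatrix τ)
    (hgeo : (convexHull ℝ 𝓟 ∩
      (affineSpan ℝ 𝓔 : Set (Matrix (Fin d) (Fin d) ℂ))).Nonempty) :
    (∃ L : Matrix (Fin d) (Fin d) ℂ →ₗ[ℂ] Matrix (Fin 2) (Fin 2) ℂ,
        (∀ ρ ∈ 𝓟, traceDist (L ρ) ket1 ≤ ε) ∧ (∀ τ ∈ 𝓔, L τ = piM M)) ↔
      ε ≥ 1 - 1/M := by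
  have hMpos : (0:ℝ) < M := lt_trans one_pos hM
  have hdist : traceDist (piM M) ket1 = 1 - 1/M := by
    rw [traceDist, traceNorm_piM M hM]; ring
  constructor
  · rintro ⟨L, hL1, hL2⟩
    obtain ⟨σ, hσc, hσa⟩ := hgeo
    have hsm : ∀ (c : ℝ) (x : Matrix (Fin d) (Fin d) ℂ), L (c • x) = c • L x := by
      intro c x
      calc L (c • x) = L ((c • (1:ℂ)) • x) := by rw [smul_assoc, one_smul]
        _ = (c • (1:ℂ)) • L x := L.map_smul _ _
        _ = c • L x := by rw [smul_assoc, one_smul]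
    -- L σ = piM M
    have hLσ : L σ = piM M := by
      refine affineSpan_induction (p := fun x => L x = piM M) hσa
        (fun x hx => hL2 x hx) ?_
      intro c u v w hu hv hw
      simp only [vadd_eq_add, vsub_eq_sub, map_add, hw]
      rw [hsm, map_sub, hu, hv, sub_self, smul_zero, zero_add]
    -- linear functional
    set φ : Matrix (Fin d) (Fin d) ℂ → ℝ :=
      fun X => ((L X) 1 1).re - ((L X) 0 0).re with hφ
    have hφlin : IsLinearMap ℝ φ := by
      constructor
      · intro x y; simp [hφ, Matrix.add_apply]; ring
      · intro c x
        rw [hφ]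
        simp only [hsm, Matrix.smul_apply, Complex.real_smul, Complex.mul_re,
          Complex.ofReal_re, Complex.ofReal_im, smul_eq_mul]
        ring
    have hconv : convexHull ℝ 𝓟 ⊆ {X | 1 - 2*ε ≤ φ X} := by
      refine convexHull_min ?_ (convex_halfSpace_ge hφlin _)
      intro ρ hρ
      have hd := hL1 ρ hρ
      have he := entry_bound (L ρ - ket1)
      have h00 : (L ρ - ket1) 0 0 = (L ρ) 0 0 := by simp [ket1, Matrix.sub_apply]
      have h11 : (L ρ - ket1) 1 1 = (L ρ) 1 1 - 1 := by simp [ket1, Matrix.sub_apply]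
      rw [h00, h11] at he
      have htd : traceNorm (L ρ - ket1) ≤ 2 * ε := by
        rw [traceDist] at hd; linarith
      have hre := Complex.re_le_norm ((L ρ) 0 0 - ((L ρ) 1 1 - 1))
      simp only [Complex.sub_re, Complex.one_re] at hre
      show 1 - 2*ε ≤ φ ρ
      simp only [hφ]
      linarith [le_trans he htd, hre]
    have hσφ : 1 - 2*ε ≤ φ σ := hconv hσc
    have : φ σ = 2/M - 1 := by
      simp only [hφ, hLσ, piM]
      simp [Matrix.diagonal_apply]
      ring
    rw [this] at hσφ
    have h2M : 2/M = 2*(1/M) := by ring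
    linarith [hσφ]
  · intro h
    refine ⟨(Matrix.traceLinearMap (Fin d) ℂ ℂ).smulRight (piM M), ?_, ?_⟩
    · intro ρ hρ
      have : ((Matrix.traceLinearMap (Fin d) ℂ ℂ).smulRight (piM M)) ρ = piM M := by
        simp [LinearMap.smulRight_apply, (h𝓟 ρ hρ).2]
      rw [this, hdist]; linarith
    · intro τ hτ
      simp [LinearMap.smulRight_apply, (h𝓔 τ hτ).2]
end

section
/- Let ε ∈ [0,1) and let M₂ > M₁ ≥ N > 1. Then there exists a linear map L from 2×2 complex matrices to 2×2 complex matrices satisfying L(π_{M₁}) = π_N, L(π_{M₂}) = π_N, and T(L(|1⟩⟨1|), |1⟩⟨1|) ≤ ε, if and only if ε ≥ 1 − 1/N. -/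
open Matrix ComplexOrder

lemma traceNorm_diag_pm (a : ℝ) (ha : 0 ≤ a) :
    traceNorm (Matrix.diagonal ![(a:ℂ), (-a:ℂ)]) = 2*a := by
  set A : Matrix (Fin 2) (Fin 2) ℂ := Matrix.diagonal ![(a:ℂ), (-a:ℂ)] with hA
  have hB : (Matrix.diagonal ![(a:ℂ), (a:ℂ)]).PosSemidef := by
    refine Matrix.posSemidef_diagonal_iff.mpr fun i => ?_
    fin_cases i <;> simpa using Complex.real_le_real.mpr ha
  have hsq : (Matrix.diagonal ![(a:ℂ), (a:ℂ)]) ^ 2 = Aᴴ * A := by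
    ext i j
    fin_cases i <;> fin_cases j <;>
      simp [A, pow_two, Matrix.mul_apply, Fin.sum_univ_two, Matrix.diagonal,
        Matrix.conjTranspose_apply] <;> ring
  have hAA : Aᴴ * A = ((a:ℂ)^2) • (1 : Matrix (Fin 2) (Fin 2) ℂ) := by
    rw [← hsq]
    ext i j
    fin_cases i <;> fin_cases j <;> simp [pow_two, Matrix.mul_apply, Fin.sum_univ_two]
  set hH := (Matrix.posSemidef_conjTranspose_mul_self A).1 with hHdef
  have hdiag := hH.conjStarAlgAut_star_eigenvectorUnitary
  rw [Unitary.conjStarAlgAut_star_apply] at hdiag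
  have gen : ∀ M : Matrix (Fin 2) (Fin 2) ℂ, M = ((a:ℂ)^2) • 1 →
      (star (hH.eigenvectorUnitary : Matrix (Fin 2) (Fin 2) ℂ)) * M * hH.eigenvectorUnitary
        = ((a:ℂ)^2) • 1 := by
    rintro M rfl
    rw [Matrix.mul_smul, Matrix.mul_one, Matrix.smul_mul, Unitary.coe_star_mul_self]
  have hD := hdiag.symm.trans (gen _ hAA)
  have hev : ∀ i, hH.eigenvalues i = a^2 := by
    intro i
    have := congrFun (congrFun hD i) i
    simp only [Matrix.diagonal_apply_eq, Function.comp_apply, Matrix.smul_apply,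
      Matrix.one_apply_eq, smul_eq_mul, mul_one] at this
    exact Complex.ofReal_injective (this.trans (Complex.ofReal_pow a 2).symm)
  unfold traceNorm
  show ((hH.eigenvectorUnitary.1 * diagonal (((↑) : ℝ → ℂ) ∘ (√·) ∘ hH.eigenvalues) *
    (star hH.eigenvectorUnitary : Matrix (Fin 2) (Fin 2) ℂ)).trace).re = 2*a
  rw [Matrix.trace_mul_cycle, Unitary.coe_star_mul_self, Matrix.one_mul]
  simp [Matrix.trace_diagonal, Fin.sum_univ_two, hev, Real.sqrt_sq ha]

lemma traceDist_piM_ket1 (N : ℝ) (hN : 1 < N) :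
    traceDist (piM N) ket1 = 1 - 1/N := by
  have hd : piM N - ket1
      = Matrix.diagonal ![((1 - 1/N : ℝ) : ℂ), ((-(1 - 1/N) : ℝ) : ℂ)] := by
    ext i j
    fin_cases i <;> fin_cases j <;>
      simp [piM, ket1, Matrix.diagonal] <;> push_cast <;> ring
  have ha : (0:ℝ) ≤ 1 - 1/N := by
    have : 1/N < 1 := by
      rw [div_lt_one (by linarith)]; linarith
    linarith
  rw [traceDist, hd]
  rw [show ((-(1 - 1/N) : ℝ) : ℂ) = -((1 - 1/N : ℝ) : ℂ) by push_cast; ring]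
  rw [traceNorm_diag_pm _ ha]
  ring

lemma trace_piM (M : ℝ) (hM : M ≠ 0) : (piM M).trace = 1 := by
  have : ((1/M : ℝ) : ℂ) ≠ 0 := by
    simpa using hM
  simp [piM, Matrix.trace_diagonal, Fin.sum_univ_two]

/-- no universal energy truncation for dirty batteries. -/
theorem stmt_3 (ε M₁ M₂ N : ℝ) (hε : ε ∈ Set.Ico (0:ℝ) 1)
    (hN : 1 < N) (hM₁ : N ≤ M₁) (hM₂ : M₁ < M₂) :
    (∃ L : Matrix (Fin 2) (Fin 2) ℂ →ₗ[ℂ] Matrix (Fin 2) (Fin 2) ℂ,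
        L (piM M₁) = piM N ∧ L (piM M₂) = piM N ∧
        traceDist (L ket1) ket1 ≤ ε) ↔
      ε ≥ 1 - 1/N := by
  have hN0 : N ≠ 0 := ne_of_gt (by linarith)
  have hM₁0 : M₁ ≠ 0 := ne_of_gt (by linarith)
  have hM₂0 : M₂ ≠ 0 := ne_of_gt (by linarith)
  constructor
  · rintro ⟨L, h1, h2, h3⟩
    have hM₁C : (M₁ : ℂ) ≠ 0 := by exact_mod_cast hM₁0
    have hM₂C : (M₂ : ℂ) ≠ 0 := by exact_mod_cast hM₂0
    have hdC : (M₂ : ℂ) - M₁ ≠ 0 := by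
      intro h
      have : (M₂ : ℂ) = M₁ := by linear_combination h
      have : M₂ = M₁ := by exact_mod_cast this
      linarith
    set α : ℂ := (M₁ * (M₂ - 1)) / (M₂ - M₁) with hα
    have hket : ket1 = α • piM M₁ + (1 - α) • piM M₂ := by
      ext i j
      fin_cases i <;> fin_cases j <;>
        simp [ket1, piM, Matrix.diagonal, hα] <;> field_simp <;> ring
    have hL : L ket1 = piM N := by
      rw [hket, map_add, _root_.map_smul, _root_.map_smul, h1, h2, ← add_smul]
      simp
    rw [hL, traceDist_piM_ket1 N hN] at h3
    exact h3
  · intro hge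
    refine ⟨(Matrix.traceLinearMap (Fin 2) ℂ ℂ).smulRight (piM N), ?_, ?_, ?_⟩
    · show (piM M₁).trace • piM N = piM N
      rw [trace_piM M₁ hM₁0, one_smul]
    · show (piM M₂).trace • piM N = piM N
      rw [trace_piM M₂ hM₂0, one_smul]
    · have hk : ket1.trace = 1 := by
        simp [ket1, Matrix.trace_diagonal, Fin.sum_univ_two]
      have : ((Matrix.traceLinearMap (Fin 2) ℂ ℂ).smulRight (piM N)) ket1 = piM N := by
        show ket1.trace • piM N = piM N
        rw [hk, one_smul]
      rw [this, traceDist_piM_ket1 N hN]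
      exact hge
end

section
/- Let ε ∈ [0,1) and let 𝓟 and 𝓔 be nonempty closed sets of density matrices on ℂ^d such that T(𝓟,𝓔) := inf_{ρ∈𝓟, τ∈𝓔} T(ρ,τ) ≤ ε. Then for every M > 1 there exists a CPTP map F from 2×2 complex matrices to d×d complex matrices such that F(π_{M′}) ∈ 𝓔 for every M′ ∈ [M,∞) and T(F(|1⟩⟨1|), ρ) ≤ ε for some ρ ∈ 𝓟. -/
open Matrix ComplexOrder

lemma sqrt_congr {n : Type*} [Fintype n] [DecidableEq n] {A B : Matrix n n ℂ}
    (h : A = B) (hA : A.PosSemidef) (hB : B.PosSemidef) :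
    (hA.1.eigenvectorUnitary.1 *
      diagonal (((↑) : ℝ → ℂ) ∘ (√·) ∘ hA.1.eigenvalues) *
      (star hA.1.eigenvectorUnitary : Matrix n n ℂ)) =
    (hB.1.eigenvectorUnitary.1 *
      diagonal (((↑) : ℝ → ℂ) ∘ (√·) ∘ hB.1.eigenvalues) *
      (star hB.1.eigenvectorUnitary : Matrix n n ℂ)) := by
  subst h; rfl

lemma conj_mul_conj {n : Type*} [Fintype n] [DecidableEq n]
    (U A B : Matrix n n ℂ) (h : star U * U = 1) :
    (U * A * star U) * (U * B * star U) = U * (A * B) * star U := by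
  simp only [Matrix.mul_assoc]
  rw [← Matrix.mul_assoc (star U) U, h, Matrix.one_mul]

section
open scoped MatrixOrder
lemma psd_sqrt_unique {n : Type*} [Fintype n] [DecidableEq n] {R S : Matrix n n ℂ}
    (hR : R.PosSemidef) (hS : S.PosSemidef) (h : R * R = S * S) : R = S :=
  calc R = CFC.sqrt (R * R) := (CFC.sqrt_unique rfl hR.nonneg).symm
    _ = CFC.sqrt (S * S) := by rw [h]
    _ = S := CFC.sqrt_unique rfl hS.nonneg
end

lemma herm_sqrt_eq {n : Type*} [Fintype n] [DecidableEq n] {B : Matrix n n ℂ}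
    (hB : B.IsHermitian) :
    ((Matrix.posSemidef_conjTranspose_mul_self B).1.eigenvectorUnitary.1 *
      diagonal (((↑) : ℝ → ℂ) ∘ (√·) ∘ (Matrix.posSemidef_conjTranspose_mul_self B).1.eigenvalues) *
      (star (Matrix.posSemidef_conjTranspose_mul_self B).1.eigenvectorUnitary : Matrix n n ℂ)) =
      (hB.eigenvectorUnitary : Matrix n n ℂ) *
        Matrix.diagonal (fun i => ((|hB.eigenvalues i| : ℝ) : ℂ)) *
        star (hB.eigenvectorUnitary : Matrix n n ℂ) := by
  set U : Matrix n n ℂ := (hB.eigenvectorUnitary : Matrix n n ℂ) with hU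
  have h1 : (star U) * U = 1 := hB.eigenvectorUnitary.2.1
  set S : Matrix n n ℂ :=
    U * Matrix.diagonal (fun i => ((|hB.eigenvalues i| : ℝ) : ℂ)) * star U with hS
  have hSpsd : S.PosSemidef := by
    rw [hS, Matrix.star_eq_conjTranspose]
    exact (Matrix.posSemidef_diagonal_iff.mpr
      (fun i => by positivity)).mul_mul_conjTranspose_same U
  have hsq : S ^ 2 = Bᴴ * B := by
    rw [hB.eq]
    conv_rhs => rw [hB.spectral_theorem, Unitary.conjStarAlgAut_apply]
    rw [hS, pow_two, conj_mul_conj _ _ _ h1, conj_mul_conj _ _ _ h1,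
      Matrix.diagonal_mul_diagonal, Matrix.diagonal_mul_diagonal]
    have hd : (fun i => ((|hB.eigenvalues i| : ℝ) : ℂ) * ((|hB.eigenvalues i| : ℝ) : ℂ))
        = fun i => ((RCLike.ofReal ∘ hB.eigenvalues) i * (RCLike.ofReal ∘ hB.eigenvalues) i) := by
      funext i
      simp only [Function.comp_apply]
      norm_cast
      exact congrArg _ (abs_mul_abs_self _)
    rw [hd]
  refine psd_sqrt_unique ?_ hSpsd ?_
  · rw [Matrix.star_eq_conjTranspose]
    exact (Matrix.posSemidef_diagonal_iff.mpr (fun i => by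
      simp only [Function.comp_apply, Complex.zero_le_real]
      exact Real.sqrt_nonneg _)).mul_mul_conjTranspose_same _
  · rw [← pow_two S, hsq]
    conv_rhs => rw [(Matrix.posSemidef_conjTranspose_mul_self B).1.spectral_theorem,
      Unitary.conjStarAlgAut_apply]
    rw [conj_mul_conj _ _ _ (Matrix.posSemidef_conjTranspose_mul_self B).1.eigenvectorUnitary.2.1,
      Matrix.diagonal_mul_diagonal]
    refine congrArg (· * _) (congrArg (_ * ·) (congrArg Matrix.diagonal (funext fun i => ?_)))
    simp only [Function.comp_apply]
    rw [← Complex.ofReal_mul, Real.mul_self_sqrt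
      ((Matrix.posSemidef_conjTranspose_mul_self B).eigenvalues_nonneg i)]
    rfl

lemma trace_conj_diag {n : Type*} [Fintype n] [DecidableEq n]
    (U : Matrix.unitaryGroup n ℂ) (f : n → ℂ) :
    ((U : Matrix n n ℂ) * Matrix.diagonal f * star (U : Matrix n n ℂ)).trace = ∑ i, f i := by
  rw [Matrix.trace_mul_cycle, U.2.1, Matrix.one_mul, Matrix.trace_diagonal]

lemma traceNorm_hermitian {n : Type*} [Fintype n] [DecidableEq n] {B : Matrix n n ℂ}
    (hB : B.IsHermitian) : traceNorm B = ∑ i, |hB.eigenvalues i| := by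
  rw [traceNorm, herm_sqrt_eq hB, trace_conj_diag]
  rw [← Complex.ofReal_sum]
  exact Complex.ofReal_re _

lemma trace_eq_sum_eigenvalues {n : Type*} [Fintype n] [DecidableEq n] {B : Matrix n n ℂ}
    (hB : B.IsHermitian) : B.trace = ∑ i, ((hB.eigenvalues i : ℝ) : ℂ) := by
  conv_lhs => rw [hB.spectral_theorem, Unitary.conjStarAlgAut_apply]
  rw [trace_conj_diag]
  rfl

lemma psd_diag_nonneg {n : Type*} [Fintype n] [DecidableEq n] {P : Matrix n n ℂ}
    (hP : P.PosSemidef) (j : n) : 0 ≤ P j j := by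
  exact hP.diag_nonneg

/-- the contraction property -/
def IsContraction {n : Type*} [Fintype n] [DecidableEq n] (E : Matrix n n ℂ) : Prop :=
  E.IsHermitian ∧ (1 - E).PosSemidef ∧ (1 + E).PosSemidef

lemma re_trace_mul_le_traceNorm {n : Type*} [Fintype n] [DecidableEq n]
    {E C : Matrix n n ℂ} (hE : IsContraction E) (hC : C.IsHermitian) :
    (Matrix.trace (E * C)).re ≤ traceNorm C := by
  set V : Matrix n n ℂ := (hC.eigenvectorUnitary : Matrix n n ℂ) with hV
  have hV1 : star V * V = 1 := hC.eigenvectorUnitary.2.1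
  set M : Matrix n n ℂ := star V * E * V with hM
  have hMd : ∀ j, (M j j).re ∈ Set.Icc (-1 : ℝ) 1 := by
    intro j
    have h1 : (star V * (1 - E) * V).PosSemidef := by
      rw [Matrix.star_eq_conjTranspose]
      exact hE.2.1.conjTranspose_mul_mul_same V
    have h2 : (star V * (1 + E) * V).PosSemidef := by
      rw [Matrix.star_eq_conjTranspose]
      exact hE.2.2.conjTranspose_mul_mul_same V
    have e1 : star V * (1 - E) * V = 1 - M := by
      rw [Matrix.mul_sub, Matrix.sub_mul, Matrix.mul_one, hV1, hM]
    have e2 : star V * (1 + E) * V = 1 + M := by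
      rw [Matrix.mul_add, Matrix.add_mul, Matrix.mul_one, hV1, hM]
    have g1 := psd_diag_nonneg h1 j
    have g2 := psd_diag_nonneg h2 j
    rw [e1] at g1; rw [e2] at g2
    simp only [Matrix.sub_apply, Matrix.add_apply, Matrix.one_apply_eq] at g1 g2
    rw [RCLike.nonneg_iff] at g1 g2
    have r1 := g1.1
    have r2 := g2.1
    simp only [map_sub, map_add, RCLike.re_to_complex, Complex.one_re] at r1 r2
    constructor <;> linarith
  have htr : Matrix.trace (E * C) = ∑ j, M j j * ((hC.eigenvalues j : ℝ) : ℂ) := by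
    conv_lhs => rw [hC.spectral_theorem, Unitary.conjStarAlgAut_apply]
    rw [← Matrix.mul_assoc, ← Matrix.mul_assoc, ← Matrix.trace_mul_cycle, ← Matrix.mul_assoc]
    simp only [Matrix.trace, Matrix.diag_apply, Matrix.mul_assoc, Matrix.diagonal_mul,
      Function.comp_apply]
    refine Finset.sum_congr rfl fun j _ => ?_
    rw [hM, Matrix.mul_assoc]
    rw [mul_comm]
    norm_cast
  rw [htr, traceNorm_hermitian hC]
  rw [Complex.re_sum]
  apply Finset.sum_le_sum
  intro j _
  have : (M j j * ((hC.eigenvalues j : ℝ) : ℂ)).re = (M j j).re * hC.eigenvalues j := by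
    simp [Complex.mul_re]
  rw [this]
  calc (M j j).re * hC.eigenvalues j ≤ |(M j j).re * hC.eigenvalues j| := le_abs_self _
    _ = |(M j j).re| * |hC.eigenvalues j| := abs_mul _ _
    _ ≤ 1 * |hC.eigenvalues j| := by
        apply mul_le_mul_of_nonneg_right _ (abs_nonneg _)
        exact abs_le.mpr ⟨(hMd j).1, (hMd j).2⟩
    _ = |hC.eigenvalues j| := one_mul _

noncomputable def signMat {n : Type*} [Fintype n] [DecidableEq n] {B : Matrix n n ℂ}
    (hB : B.IsHermitian) : Matrix n n ℂ :=
  (hB.eigenvectorUnitary : Matrix n n ℂ) *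
    Matrix.diagonal (fun i => ((Real.sign (hB.eigenvalues i) : ℝ) : ℂ)) *
    star (hB.eigenvectorUnitary : Matrix n n ℂ)

lemma conj_diag_hermitian {n : Type*} [Fintype n] [DecidableEq n]
    (U : Matrix.unitaryGroup n ℂ) (s : n → ℝ) :
    (((U : Matrix n n ℂ) * Matrix.diagonal (fun i => ((s i : ℝ) : ℂ)) *
      star (U : Matrix n n ℂ))).IsHermitian := by
  rw [Matrix.star_eq_conjTranspose]
  apply Matrix.isHermitian_mul_mul_conjTranspose
  rw [Matrix.IsHermitian, Matrix.diagonal_conjTranspose]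
  exact congrArg Matrix.diagonal (funext fun i => Complex.conj_ofReal _)

lemma contraction_of_unitary_conj {n : Type*} [Fintype n] [DecidableEq n]
    (U : Matrix.unitaryGroup n ℂ) (s : n → ℝ) (hs : ∀ i, |s i| ≤ 1) :
    IsContraction ((U : Matrix n n ℂ) * Matrix.diagonal (fun i => ((s i : ℝ) : ℂ)) *
      star (U : Matrix n n ℂ)) := by
  set Um : Matrix n n ℂ := (U : Matrix n n ℂ)
  have hU2 : Um * star Um = 1 := U.2.2
  refine ⟨conj_diag_hermitian U s, ?_, ?_⟩
  · have e : (1 : Matrix n n ℂ) - Um * Matrix.diagonal (fun i => ((s i : ℝ) : ℂ)) * star Um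
        = Um * Matrix.diagonal (fun i => ((1 - s i : ℝ) : ℂ)) * star Um := by
      have : Matrix.diagonal (fun i => ((1 - s i : ℝ) : ℂ))
          = 1 - Matrix.diagonal (fun i => ((s i : ℝ) : ℂ)) := by
        have hfun : (fun i => ((1 - s i : ℝ) : ℂ)) = fun i => (1 : ℂ) - ((s i : ℝ) : ℂ) := by
          funext i; push_cast; ring
        rw [hfun, ← Matrix.diagonal_sub, Matrix.diagonal_one]
      rw [this, Matrix.mul_sub, Matrix.sub_mul, Matrix.mul_one, hU2]
    rw [e, Matrix.star_eq_conjTranspose]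
    refine (Matrix.posSemidef_diagonal_iff.mpr fun i => ?_).mul_mul_conjTranspose_same Um
    rw [Complex.zero_le_real]
    linarith [(abs_le.mp (hs i)).2]
  · have e : (1 : Matrix n n ℂ) + Um * Matrix.diagonal (fun i => ((s i : ℝ) : ℂ)) * star Um
        = Um * Matrix.diagonal (fun i => ((1 + s i : ℝ) : ℂ)) * star Um := by
      have : Matrix.diagonal (fun i => ((1 + s i : ℝ) : ℂ))
          = 1 + Matrix.diagonal (fun i => ((s i : ℝ) : ℂ)) := by
        have hfun : (fun i => ((1 + s i : ℝ) : ℂ)) = fun i => (1 : ℂ) + ((s i : ℝ) : ℂ) := by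
          funext i; push_cast; ring
        rw [hfun, ← Matrix.diagonal_add, Matrix.diagonal_one]
      rw [this, Matrix.mul_add, Matrix.add_mul, Matrix.mul_one, hU2]
    rw [e, Matrix.star_eq_conjTranspose]
    refine (Matrix.posSemidef_diagonal_iff.mpr fun i => ?_).mul_mul_conjTranspose_same Um
    rw [Complex.zero_le_real]
    linarith [(abs_le.mp (hs i)).1]

lemma signMat_isContraction {n : Type*} [Fintype n] [DecidableEq n] {B : Matrix n n ℂ}
    (hB : B.IsHermitian) : IsContraction (signMat hB) :=
  contraction_of_unitary_conj hB.eigenvectorUnitary _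
    (fun i => by rcases Real.sign_apply_eq (hB.eigenvalues i) with h | h | h <;> rw [h] <;> norm_num)

lemma re_trace_signMat_mul {n : Type*} [Fintype n] [DecidableEq n] {B : Matrix n n ℂ}
    (hB : B.IsHermitian) : (Matrix.trace (signMat hB * B)).re = traceNorm B := by
  have h1 : star (hB.eigenvectorUnitary : Matrix n n ℂ) * (hB.eigenvectorUnitary : Matrix n n ℂ)
      = 1 := hB.eigenvectorUnitary.2.1
  have e : signMat hB * B = (hB.eigenvectorUnitary : Matrix n n ℂ) *
      Matrix.diagonal (fun i => ((Real.sign (hB.eigenvalues i) * hB.eigenvalues i : ℝ) : ℂ)) *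
      star (hB.eigenvectorUnitary : Matrix n n ℂ) := by
    have e2 : signMat hB * B = signMat hB * ((hB.eigenvectorUnitary : Matrix n n ℂ) *
        Matrix.diagonal (RCLike.ofReal ∘ hB.eigenvalues) *
        star (hB.eigenvectorUnitary : Matrix n n ℂ)) := congrArg _ hB.spectral_theorem
    rw [e2, signMat, conj_mul_conj _ _ _ h1, Matrix.diagonal_mul_diagonal]
    have hfun : (fun i => ((Real.sign (hB.eigenvalues i) : ℝ) : ℂ) *
        (RCLike.ofReal ∘ hB.eigenvalues) i)
        = fun i => ((Real.sign (hB.eigenvalues i) * hB.eigenvalues i : ℝ) : ℂ) := by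
      funext i
      simp only [Function.comp_apply]
      exact (Complex.ofReal_mul _ _).symm
    rw [hfun]
  rw [e, trace_conj_diag, traceNorm_hermitian hB, ← Complex.ofReal_sum, Complex.ofReal_re]
  refine Finset.sum_congr rfl fun i _ => ?_
  rcases lt_trichotomy (hB.eigenvalues i) 0 with h | h | h
  · rw [Real.sign_of_neg h, abs_of_neg h]; ring
  · rw [h]; simp
  · rw [Real.sign_of_pos h, abs_of_pos h]; ring

lemma traceNorm_neg {n : Type*} [Fintype n] [DecidableEq n] (A : Matrix n n ℂ) :
    traceNorm (-A) = traceNorm A := by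
  unfold traceNorm
  rw [sqrt_congr (show (-A)ᴴ * (-A) = Aᴴ * A by simp) (Matrix.posSemidef_conjTranspose_mul_self (-A))
    (Matrix.posSemidef_conjTranspose_mul_self A)]

lemma traceDist_comm {n : Type*} [Fintype n] [DecidableEq n] (X Y : Matrix n n ℂ) :
    traceDist X Y = traceDist Y X := by
  unfold traceDist
  rw [show Y - X = -(X - Y) from (neg_sub X Y).symm, traceNorm_neg]

lemma traceNorm_nonneg_of_hermitian {n : Type*} [Fintype n] [DecidableEq n] {A : Matrix n n ℂ}
    (hA : A.IsHermitian) : 0 ≤ traceNorm A := by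
  rw [traceNorm_hermitian hA]
  exact Finset.sum_nonneg fun i _ => abs_nonneg _

lemma density_entry_bound {n : Type*} [Fintype n] [DecidableEq n] {ρ : Matrix n n ℂ}
    (hρ : IsDensityMatrix ρ) (i j : n) : ‖ρ i j‖ ≤ 1 := by
  obtain ⟨hpsd, htr⟩ := hρ
  set hH : ρ.IsHermitian := hpsd.1
  set U : Matrix n n ℂ := (hH.eigenvectorUnitary : Matrix n n ℂ) with hU
  have hU2 : U * star U = 1 := hH.eigenvectorUnitary.2.2
  have hrow : ∀ (a : n) (k : n), ‖U a k‖ ≤ 1 := by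
    intro a k
    have h1 : ∑ l, U a l * star (U a l) = 1 := by
      have := congrFun (congrFun hU2 a) a
      simpa [Matrix.mul_apply, Matrix.one_apply, Matrix.star_apply] using this
    have h2 : ∑ l, Complex.normSq (U a l) = 1 := by
      have h1' : ∑ l, ((Complex.normSq (U a l) : ℝ) : ℂ) = 1 := by
        rw [← h1]
        refine Finset.sum_congr rfl fun l _ => ?_
        rw [RCLike.star_def, Complex.mul_conj]
      exact_mod_cast h1'
    have h3 : Complex.normSq (U a k) ≤ 1 := by
      rw [← h2]
      exact Finset.single_le_sum (fun l _ => Complex.normSq_nonneg _) (Finset.mem_univ k)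
    have := Complex.sq_norm (U a k)
    nlinarith [norm_nonneg (U a k)]
  have hsum : ∑ k, hH.eigenvalues k = 1 := by
    have := trace_eq_sum_eigenvalues hH
    rw [htr, ← Complex.ofReal_sum] at this
    exact_mod_cast this.symm
  have hent : ρ i j = ∑ k, U i k * ((hH.eigenvalues k : ℝ) : ℂ) * star (U j k) := by
    conv_lhs => rw [hH.spectral_theorem, Unitary.conjStarAlgAut_apply]
    simp [Matrix.mul_apply, Matrix.mul_diagonal, Matrix.diagonal_apply, Finset.sum_mul,
      Matrix.star_apply]
    rfl
  rw [hent]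
  calc ‖∑ k, U i k * ((hH.eigenvalues k : ℝ) : ℂ) * star (U j k)‖
      ≤ ∑ k, ‖U i k * ((hH.eigenvalues k : ℝ) : ℂ) * star (U j k)‖ :=
        norm_sum_le _ _
    _ ≤ ∑ k, hH.eigenvalues k := by
        apply Finset.sum_le_sum
        intro k _
        rw [norm_mul, norm_mul]
        have h0 : ‖((hH.eigenvalues k : ℝ) : ℂ)‖ = hH.eigenvalues k := by
          rw [Complex.norm_real, Real.norm_eq_abs, abs_of_nonneg (hpsd.eigenvalues_nonneg k)]
        calc ‖U i k‖ * ‖((hH.eigenvalues k : ℝ) : ℂ)‖ *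
              ‖star (U j k)‖
            ≤ 1 * ‖((hH.eigenvalues k : ℝ) : ℂ)‖ * 1 := by
              apply mul_le_mul (mul_le_mul (hrow i k) le_rfl (norm_nonneg _)
                (zero_le_one : (0:ℝ) ≤ 1))
              · simpa using hrow j k
              · exact norm_nonneg _
              · positivity
          _ = hH.eigenvalues k := by rw [one_mul, mul_one, h0]
    _ = 1 := hsum

lemma isCompact_entryBall (d : ℕ) :
    IsCompact {A : Matrix (Fin d) (Fin d) ℂ | ∀ i j, ‖A i j‖ ≤ 1} := by
  have h1 : IsCompact (Set.univ.pi fun _ : Fin d =>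
      Set.univ.pi fun _ : Fin d => Metric.closedBall (0:ℂ) 1) :=
    isCompact_univ_pi fun _ => isCompact_univ_pi fun _ => isCompact_closedBall _ _
  have h2 : Continuous (Matrix.of : (Fin d → Fin d → ℂ) → Matrix (Fin d) (Fin d) ℂ) :=
    continuous_matrix fun i j => (continuous_apply j).comp (continuous_apply i)
  have himg : {A : Matrix (Fin d) (Fin d) ℂ | ∀ i j, ‖A i j‖ ≤ 1} =
      Matrix.of '' (Set.univ.pi fun _ : Fin d =>
        Set.univ.pi fun _ : Fin d => Metric.closedBall (0:ℂ) 1) := by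
    ext A
    constructor
    · intro hA
      refine ⟨fun i j => A i j, fun i _ => fun j _ => ?_, rfl⟩
      simpa [Complex.dist_eq] using hA i j
    · rintro ⟨f, hf, rfl⟩ i j
      simpa [Complex.dist_eq] using hf i (Set.mem_univ i) j (Set.mem_univ j)
  rw [himg]
  exact h1.image h2

lemma isCompact_of_density {d : ℕ} {P : Set (Matrix (Fin d) (Fin d) ℂ)}
    (hP : ∀ ρ ∈ P, IsDensityMatrix ρ) (hPcl : IsClosed P) : IsCompact P := by
  refine IsCompact.of_isClosed_subset (isCompact_entryBall d) hPcl ?_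
  intro ρ hρ i j
  exact density_entry_bound (hP ρ hρ) i j

lemma continuous_retrace {d : ℕ} (E : Matrix (Fin d) (Fin d) ℂ) :
    Continuous (fun p : Matrix (Fin d) (Fin d) ℂ × Matrix (Fin d) (Fin d) ℂ =>
      (Matrix.trace (E * (p.1 - p.2))).re) := by
  apply Complex.continuous_re.comp
  exact Continuous.matrix_trace (Continuous.matrix_mul continuous_const
    (continuous_fst.sub continuous_snd))

lemma exists_close_pair {d : ℕ} {ε : ℝ} (hε0 : 0 ≤ ε)
    (𝓟 𝓔 : Set (Matrix (Fin d) (Fin d) ℂ))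
    (h𝓟ne : 𝓟.Nonempty) (h𝓔ne : 𝓔.Nonempty)
    (h𝓟 : ∀ ρ ∈ 𝓟, IsDensityMatrix ρ) (h𝓔 : ∀ τ ∈ 𝓔, IsDensityMatrix τ)
    (h𝓟cl : IsClosed 𝓟) (h𝓔cl : IsClosed 𝓔)
    (hsep : sInf {r : ℝ | ∃ ρ ∈ 𝓟, ∃ τ ∈ 𝓔, r = traceDist ρ τ} ≤ ε) :
    ∃ ρ ∈ 𝓟, ∃ τ ∈ 𝓔, traceDist ρ τ ≤ ε := by
  set S := {r : ℝ | ∃ ρ ∈ 𝓟, ∃ τ ∈ 𝓔, r = traceDist ρ τ} with hSdef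
  have hSne : S.Nonempty := by
    obtain ⟨ρ₀, hρ₀⟩ := h𝓟ne
    obtain ⟨τ₀, hτ₀⟩ := h𝓔ne
    exact ⟨traceDist ρ₀ τ₀, ρ₀, hρ₀, τ₀, hτ₀, rfl⟩
  have hherm : ∀ p : Matrix (Fin d) (Fin d) ℂ × Matrix (Fin d) (Fin d) ℂ,
      p ∈ 𝓟 ×ˢ 𝓔 → (p.1 - p.2).IsHermitian := fun p hp =>
    ((h𝓟 p.1 hp.1).1.1).sub ((h𝓔 p.2 hp.2).1.1)
  have hfwd : ∀ p ∈ 𝓟 ×ˢ 𝓔, ∀ c : ℝ, traceDist p.1 p.2 ≤ c →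
      ∀ E, IsContraction E → (Matrix.trace (E * (p.1 - p.2))).re ≤ 2 * c := by
    intro p hp c hc E hE
    have h1 := re_trace_mul_le_traceNorm hE (hherm p hp)
    have h2 : traceNorm (p.1 - p.2) ≤ 2 * c := by
      rw [traceDist] at hc; linarith
    linarith
  have hbwd : ∀ p ∈ 𝓟 ×ˢ 𝓔, ∀ c : ℝ,
      (∀ E, IsContraction E → (Matrix.trace (E * (p.1 - p.2))).re ≤ 2 * c) →
      traceDist p.1 p.2 ≤ c := by
    intro p hp c hc
    have h1 := hc (signMat (hherm p hp)) (signMat_isContraction _)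
    rw [re_trace_signMat_mul (hherm p hp)] at h1
    rw [traceDist]; linarith
  set D : ℕ → Set (Matrix (Fin d) (Fin d) ℂ × Matrix (Fin d) (Fin d) ℂ) := fun k =>
    (𝓟 ×ˢ 𝓔) ∩ {p | ∀ E, IsContraction E →
      (Matrix.trace (E * (p.1 - p.2))).re ≤ 2 * (ε + 1/(k+1))} with hDdef
  have hDcl : ∀ k, IsClosed (D k) := by
    intro k
    refine (h𝓟cl.prod h𝓔cl).inter ?_
    have : {p : Matrix (Fin d) (Fin d) ℂ × Matrix (Fin d) (Fin d) ℂ |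
        ∀ E, IsContraction E → (Matrix.trace (E * (p.1 - p.2))).re ≤ 2 * (ε + 1/(k+1))}
        = ⋂ E, ⋂ (_ : IsContraction E),
          {p | (Matrix.trace (E * (p.1 - p.2))).re ≤ 2 * (ε + 1/(k+1))} := by
      ext p; simp
    rw [this]
    exact isClosed_iInter fun E => isClosed_iInter fun _ =>
      isClosed_le (continuous_retrace E) continuous_const
  have hDcomp : ∀ k, IsCompact (D k) :=
    fun k => IsCompact.of_isClosed_subset
      ((isCompact_of_density h𝓟 h𝓟cl).prod (isCompact_of_density h𝓔 h𝓔cl))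
      (hDcl k) Set.inter_subset_left
  have hDne : ∀ k, (D k).Nonempty := by
    intro k
    have hk : (0:ℝ) < 1/(k+1) := by positivity
    have : sInf S < ε + 1/(k+1) := lt_of_le_of_lt hsep (by linarith)
    obtain ⟨r, hrS, hr⟩ := exists_lt_of_csInf_lt hSne this
    obtain ⟨ρ, hρ, τ, hτ, rfl⟩ := hrS
    refine ⟨(ρ, τ), ⟨hρ, hτ⟩, ?_⟩
    exact hfwd (ρ, τ) ⟨hρ, hτ⟩ _ hr.le
  have hDanti : ∀ i j : ℕ, i ≤ j → D j ⊆ D i := by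
    intro i j hij p hp
    refine ⟨hp.1, fun E hE => ?_⟩
    refine le_trans (hp.2 E hE) ?_
    have : (1:ℝ)/(j+1) ≤ 1/(i+1) := by
      apply one_div_le_one_div_of_le (by positivity)
      exact_mod_cast by omega
    linarith
  have hdir : Directed (· ⊇ ·) D := fun i j =>
    ⟨max i j, hDanti i (max i j) (le_max_left _ _), hDanti j (max i j) (le_max_right _ _)⟩
  obtain ⟨p, hp⟩ := IsCompact.nonempty_iInter_of_directed_nonempty_isCompact_isClosed
    D hdir hDne hDcomp hDcl
  have hpmem : ∀ k, p ∈ D k := by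
    intro k; exact Set.mem_iInter.mp hp k
  have hpPE : p ∈ 𝓟 ×ˢ 𝓔 := (hpmem 0).1
  refine ⟨p.1, hpPE.1, p.2, hpPE.2, ?_⟩
  apply hbwd p hpPE
  intro E hE
  by_contra hlt
  push_neg at hlt
  obtain ⟨k, hk⟩ := exists_nat_one_div_lt
    (show (0:ℝ) < ((Matrix.trace (E * (p.1 - p.2))).re - 2 * ε) / 2 by linarith)
  have := (hpmem k).2 E hE
  linarith

noncomputable def constChannel {n m : Type*} [Fintype n] [Fintype m]
    (τ : Matrix m m ℂ) : Matrix n n ℂ →ₗ[ℂ] Matrix m m ℂ where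
  toFun X := X.trace • τ
  map_add' X Y := by rw [Matrix.trace_add, add_smul]
  map_smul' c X := by rw [Matrix.trace_smul, RingHom.id_apply, smul_assoc]

lemma constChannel_apply {n m : Type*} [Fintype n] [Fintype m]
    (τ : Matrix m m ℂ) (X : Matrix n n ℂ) : constChannel τ X = X.trace • τ := rfl

lemma choi_constChannel {n m : Type*} [Fintype n] [DecidableEq n] [Fintype m]
    (τ : Matrix m m ℂ) :
    choiMatrix (constChannel (n := n) τ) =
      fun p q => (if p.1 = q.1 then (1:ℂ) else 0) * τ p.2 q.2 := by
  funext p q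
  show ((Matrix.single p.1 q.1 (1:ℂ)).trace • τ) p.2 q.2 = _
  rcases eq_or_ne p.1 q.1 with h | h
  · rw [if_pos h, ← h, Matrix.trace_single_eq_same]
    simp
  · rw [if_neg h, Matrix.trace_single_eq_of_ne _ _ _ h]
    simp

lemma constChannel_cptp {n m : Type*} [Fintype n] [DecidableEq n] [Fintype m] [DecidableEq m]
    {τ : Matrix m m ℂ} (hτ : IsDensityMatrix τ) : IsCPTP (constChannel (n := n) τ) := by
  constructor
  · rw [choi_constChannel]
    refine Matrix.PosSemidef.of_dotProduct_mulVec_nonneg ?_ ?_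
    · show Matrix.conjTranspose _ = _
      funext p q
      change star ((if q.1 = p.1 then (1:ℂ) else 0) * τ q.2 p.2) =
        (if p.1 = q.1 then (1:ℂ) else 0) * τ p.2 q.2
      rcases eq_or_ne p.1 q.1 with h | h
      · rw [if_pos h.symm, one_mul, if_pos h, one_mul]
        have h2 := congrFun (congrFun hτ.1.1 p.2) q.2
        rw [Matrix.conjTranspose_apply] at h2
        exact h2
      · rw [if_neg (Ne.symm h), zero_mul, star_zero, if_neg h, zero_mul]
    · intro x
      have key : dotProduct (star x)
          ((fun p q => (if p.1 = q.1 then (1:ℂ) else 0) * τ p.2 q.2) *ᵥ x)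
          = ∑ a : n, dotProduct (star fun i => x (a, i)) (τ *ᵥ fun i => x (a, i)) := by
        simp only [dotProduct, Matrix.mulVec, Pi.star_apply, Fintype.sum_prod_type,
          ite_mul, one_mul, zero_mul]
        refine Finset.sum_congr rfl fun a _ => Finset.sum_congr rfl fun i _ => ?_
        congr 1
        rw [Finset.sum_comm]
        refine Finset.sum_congr rfl fun j _ => ?_
        rw [Finset.sum_ite_eq]
        simp
      rw [key]
      exact Finset.sum_nonneg fun a _ => hτ.1.dotProduct_mulVec_nonneg _
  · intro X
    rw [constChannel_apply, Matrix.trace_smul, hτ.2, smul_eq_mul, mul_one]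

/-- for closed `𝓟, 𝓔` with `T(𝓟,𝓔) ≤ ε`, formation from a dirty
battery is achievable for every `M > 1` at zero work cost. -/
theorem stmt_12 {d : ℕ} (ε : ℝ) (hε : ε ∈ Set.Ico (0:ℝ) 1)
    (𝓟 𝓔 : Set (Matrix (Fin d) (Fin d) ℂ))
    (h𝓟ne : 𝓟.Nonempty) (h𝓔ne : 𝓔.Nonempty)
    (h𝓟 : ∀ ρ ∈ 𝓟, IsDensityMatrix ρ) (h𝓔 : ∀ τ ∈ 𝓔, IsDensityMatrix τ)
    (h𝓟cl : IsClosed 𝓟) (h𝓔cl : IsClosed 𝓔)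
    (hsep : sInf {r : ℝ | ∃ ρ ∈ 𝓟, ∃ τ ∈ 𝓔, r = traceDist ρ τ} ≤ ε) :
    ∀ M : ℝ, 1 < M →
      ∃ F : Matrix (Fin 2) (Fin 2) ℂ →ₗ[ℂ] Matrix (Fin d) (Fin d) ℂ,
        IsCPTP F ∧ (∀ M' : ℝ, M ≤ M' → F (piM M') ∈ 𝓔) ∧
        ∃ ρ ∈ 𝓟, traceDist (F ket1) ρ ≤ ε := by
  intro M hM
  obtain ⟨ρ, hρ, τ, hτ, hd⟩ :=
    exists_close_pair hε.1 𝓟 𝓔 h𝓟ne h𝓔ne h𝓟 h𝓔 h𝓟cl h𝓔cl hsep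
  refine ⟨constChannel τ, constChannel_cptp (h𝓔 τ hτ), ?_, ρ, hρ, ?_⟩
  · intro M' _
    have htr : (piM M').trace = 1 := by
      simp only [piM, Matrix.trace_diagonal, Fin.sum_univ_two, Matrix.cons_val_zero,
        Matrix.cons_val_one, Matrix.head_cons]
      push_cast
      ring
    rw [constChannel_apply, htr, one_smul]
    exact hτ
  · have htr : (ket1).trace = 1 := by
      simp [ket1, Matrix.trace_diagonal, Fin.sum_univ_two]
    rw [constChannel_apply, htr, one_smul, traceDist_comm]
    exact hd
end

section
/- Let n ≥ 2 be an integer, δ > 0, ε ∈ [0, 1/2), and M > 1. Then there is no linear map L from 2×2 complex matrices to 2^n×2^n complex matrices such that T(L(|1⟩⟨1|), |1⟩⟨1|^{⊗n}) ≤ ε and, for every M′ ∈ [M, ∞), there exists M″ ∈ [2, 2+δ] with L(π_{M′}) = π_{M″}^{⊗n}. (Consequently, the one-shot work cost of preparing the uncertain athermal state ({|1⟩⟨1|^{⊗n}}, {π_{M″}^{⊗n} : M″ ∈ [2,2+δ]}) from a dirty battery is infinite even at the level of Gibbs-preserving linear maps.) -/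
open Matrix ComplexOrder

namespace Stmt18Aux

lemma card_filter_val_lt (n k : ℕ) (hk : k ≤ n) :
    (Finset.univ.filter (fun i : Fin n => (i : ℕ) < k)).card = k := by
  have h : ∀ m ∈ Finset.range k, m < n := fun m hm => lt_of_lt_of_le (Finset.mem_range.1 hm) hk
  have : (Finset.univ.filter (fun i : Fin n => (i : ℕ) < k)) = (Finset.range k).attachFin h := by
    ext i; simp [Finset.mem_attachFin]
  rw [this, Finset.card_attachFin, Finset.card_range]

open scoped MatrixOrder in
lemma traceNorm_diagonal_real {ι : Type*} [Fintype ι] [DecidableEq ι] (f : ι → ℝ) :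
    traceNorm (Matrix.diagonal fun x => (f x : ℂ)) = ∑ x, |f x| := by
  have hPSD : (Matrix.diagonal fun x => ((|f x| : ℝ) : ℂ)).PosSemidef := by
    rw [Matrix.posSemidef_diagonal_iff]
    intro i
    exact Complex.zero_le_real.2 (abs_nonneg (f i))
  have hsq : (Matrix.diagonal fun x => ((|f x| : ℝ) : ℂ)) ^ 2
      = (Matrix.diagonal fun x => (f x : ℂ))ᴴ * (Matrix.diagonal fun x => (f x : ℂ)) := by
    rw [pow_two, Matrix.diagonal_conjTranspose, Matrix.diagonal_mul_diagonal,
      Matrix.diagonal_mul_diagonal]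
    ext x y
    rcases eq_or_ne x y with rfl | hxy
    · simp only [Matrix.diagonal_apply_eq, Pi.star_apply, Complex.star_def, Complex.conj_ofReal]
      exact_mod_cast congrArg Complex.ofReal (abs_mul_abs_self (f x))
    · rw [Matrix.diagonal_apply_ne _ hxy, Matrix.diagonal_apply_ne _ hxy]
  have hB := (Matrix.posSemidef_conjTranspose_mul_self (Matrix.diagonal fun x => (f x : ℂ))).1
  have e : traceNorm (Matrix.diagonal fun x => (f x : ℂ))
      = (cfc Real.sqrt ((Matrix.diagonal fun x => (f x : ℂ))ᴴ * (Matrix.diagonal fun x => (f x : ℂ)))).trace.re := by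
    rw [hB.cfc_eq, Matrix.IsHermitian.cfc, Unitary.conjStarAlgAut_apply]
    rfl
  have hspec : ∀ x ∈ spectrum ℝ (Matrix.diagonal fun x => ((|f x| : ℝ) : ℂ)), 0 ≤ x :=
    fun x hx => spectrum_nonneg_of_nonneg hPSD.nonneg hx
  have hc : cfc Real.sqrt ((Matrix.diagonal fun x => (f x : ℂ))ᴴ * (Matrix.diagonal fun x => (f x : ℂ)))
      = Matrix.diagonal fun x => ((|f x| : ℝ) : ℂ) := by
    rw [← hsq]
    refine (cfc_comp_pow (p := IsSelfAdjoint) Real.sqrt 2 (Matrix.diagonal fun x => ((|f x| : ℝ) : ℂ))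
      Real.continuous_sqrt.continuousOn (hPSD.isHermitian : IsSelfAdjoint _)).symm.trans ?_
    rw [cfc_congr (p := IsSelfAdjoint) (g := fun x : ℝ => x) (fun x hx => Real.sqrt_sq (hspec x hx))]
    exact cfc_id' ℝ _ (hPSD.isHermitian : IsSelfAdjoint _)
  rw [e, hc, Matrix.trace_diagonal]
  simp

lemma tensPow_diagonal (n : ℕ) (v : Fin 2 → ℝ) :
    tensPow (Matrix.diagonal fun j => ((v j : ℝ) : ℂ)) n
      = Matrix.diagonal fun x : Fin n → Fin 2 => ((∏ i, v (x i) : ℝ) : ℂ) := by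
  ext x y
  rcases eq_or_ne x y with rfl | hxy
  · rw [Matrix.diagonal_apply_eq]
    unfold tensPow
    push_cast
    exact Finset.prod_congr rfl fun i _ => Matrix.diagonal_apply_eq _ _
  · rw [Matrix.diagonal_apply_ne _ hxy]
    obtain ⟨i, hi⟩ := Function.ne_iff.1 hxy
    exact Finset.prod_eq_zero (Finset.mem_univ i) (Matrix.diagonal_apply_ne _ hi)

lemma piM_eq_diag (M : ℝ) :
    piM M = Matrix.diagonal fun j => ((![1 - 1/M, 1/M] j : ℝ) : ℂ) := by
  have h : (fun j => ((![1 - 1/M, 1/M] j : ℝ) : ℂ)) = ![((1 - 1/M : ℝ) : ℂ), ((1/M : ℝ) : ℂ)] := by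
    funext j; fin_cases j <;> simp
  rw [piM, h]

lemma ket1_eq_diag :
    ket1 = Matrix.diagonal fun j => ((![0, 1] j : ℝ) : ℂ) := by
  have h : (fun j => ((![0, 1] j : ℝ) : ℂ)) = ![(0 : ℂ), 1] := by
    funext j; fin_cases j <;> simp
  rw [ket1, h]

lemma tensPow_entry (n k : ℕ) (hk : k ≤ n) (v : Fin 2 → ℝ) :
    (∏ i : Fin n, v ((fun i : Fin n => if (i : ℕ) < k then (1 : Fin 2) else 0) i))
      = v 1 ^ k * v 0 ^ (n - k) := by
  have h1 : ∀ i : Fin n, v (if (i : ℕ) < k then (1 : Fin 2) else 0)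
      = if (i : ℕ) < k then v 1 else v 0 := by
    intro i; by_cases h : (i : ℕ) < k <;> simp [h]
  simp only [h1]
  rw [Finset.prod_ite, Finset.prod_const, Finset.prod_const, card_filter_val_lt n k hk]
  congr 2
  have h3 := Finset.card_filter_add_card_filter_not
    (s := (Finset.univ : Finset (Fin n))) (p := fun i : Fin n => (i : ℕ) < k)
  rw [card_filter_val_lt n k hk] at h3
  simp only [Finset.card_univ, Fintype.card_fin] at h3
  have h4 : (Finset.filter (fun a : Fin n => ¬ (a : ℕ) < k) Finset.univ).card = n - k := by
    omega
  convert h4 using 2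

end Stmt18Aux


open Stmt18Aux in
/-- infinite work cost of forming `n ≥ 2` copies of the uncertain
excited battery from a dirty battery, even under Gibbs-preserving linear maps. -/
theorem stmt_18 (n : ℕ) (hn : 2 ≤ n) (δ ε M : ℝ) (hδ : 0 < δ)
    (hε : ε ∈ Set.Ico (0:ℝ) (1/2)) (hM : 1 < M) :
    ¬ ∃ L : Matrix (Fin 2) (Fin 2) ℂ →ₗ[ℂ]
        Matrix (Fin n → Fin 2) (Fin n → Fin 2) ℂ,
      traceDist (L ket1) (tensPow ket1 n) ≤ ε ∧
      ∀ M' : ℝ, M ≤ M' → ∃ M'' ∈ Set.Icc (2:ℝ) (2 + δ),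
        L (piM M') = tensPow (piM M'') n := by
  rintro ⟨L, hdist, hG⟩
  obtain ⟨m, rfl⟩ : ∃ m, n = m + 2 := ⟨n - 2, by omega⟩
  have hM0 : (0:ℝ) < M := lt_trans one_pos hM
  obtain ⟨N1, hN1, hL1⟩ := hG M le_rfl
  obtain ⟨N2, hN2, hL2⟩ := hG (M+1) (by linarith)
  obtain ⟨N3, hN3, hL3⟩ := hG (M+2) (by linarith)
  -- basic positivity facts about the s_i := 1/N_i
  have hNfacts : ∀ N : ℝ, N ∈ Set.Icc (2:ℝ) (2+δ) → 0 < 1/N ∧ 1/N ≤ 1/2 := by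
    intro N hN
    obtain ⟨h2, _⟩ := hN
    constructor
    · positivity
    · rw [div_le_div_iff₀ (by linarith) (by norm_num)]; linarith
  obtain ⟨hs1pos, hs1le⟩ := hNfacts N1 hN1
  obtain ⟨hs2pos, hs2le⟩ := hNfacts N2 hN2
  obtain ⟨hs3pos, hs3le⟩ := hNfacts N3 hN3
  -- decomposition of piM
  set P0 : Matrix (Fin 2) (Fin 2) ℂ := Matrix.diagonal ![1, 0] with hP0def
  set DD : Matrix (Fin 2) (Fin 2) ℂ := Matrix.diagonal ![-1, 1] with hDDdef
  have hpiM : ∀ M' : ℝ, piM M' = P0 + ((1/M' : ℝ) : ℂ) • DD := by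
    intro M'
    ext i j
    fin_cases i <;> fin_cases j <;>
      simp [piM, hP0def, hDDdef, Matrix.add_apply, Matrix.smul_apply, Matrix.diagonal] <;>
      push_cast <;> ring
  have hketP : ket1 = P0 + DD := by
    ext i j
    fin_cases i <;> fin_cases j <;>
      simp [ket1, hP0def, hDDdef, Matrix.add_apply, Matrix.diagonal]
  -- the marked entries
  set x : ℕ → (Fin (m+2) → Fin 2) := fun k i => if (i : ℕ) < k then 1 else 0 with hxdef
  set c : ℕ → ℂ := fun k => L P0 (x k) (x k) with hcdef
  set d : ℕ → ℂ := fun k => L DD (x k) (x k) with hddef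
  have key : ∀ (M' N'' : ℝ) (k : ℕ), k ≤ m + 2 →
      L (piM M') = tensPow (piM N'') (m+2) →
      c k + ((1/M' : ℝ) : ℂ) * d k
        = (((1/N'')^k * (1 - 1/N'')^(m+2-k) : ℝ) : ℂ) := by
    intro M' N'' k hk hL'
    have h1 : L (piM M') = L P0 + ((1/M' : ℝ) : ℂ) • L DD := by
      rw [hpiM M', map_add, LinearMap.map_smul]
    have h2 := congrFun (congrFun (h1.symm.trans hL') (x k)) (x k)
    rw [Matrix.add_apply, Matrix.smul_apply, smul_eq_mul] at h2
    rw [piM_eq_diag N'', tensPow_diagonal] at h2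
    rw [Matrix.diagonal_apply_eq] at h2
    rw [hxdef] at h2
    rw [tensPow_entry (m+2) k hk] at h2
    have hv1 : (![1 - 1/N'', 1/N''] : Fin 2 → ℝ) 1 = 1/N'' := rfl
    have hv0 : (![1 - 1/N'', 1/N''] : Fin 2 → ℝ) 0 = 1 - 1/N'' := rfl
    rw [hv1, hv0] at h2
    exact h2
  -- the nine equations
  have E10 := key M N1 0 (by omega) hL1
  have E11 := key M N1 1 (by omega) hL1
  have E12 := key M N1 2 (by omega) hL1
  have E20 := key (M+1) N2 0 (by omega) hL2
  have E21 := key (M+1) N2 1 (by omega) hL2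
  have E22 := key (M+1) N2 2 (by omega) hL2
  have E30 := key (M+2) N3 0 (by omega) hL3
  have E31 := key (M+2) N3 1 (by omega) hL3
  have E32 := key (M+2) N3 2 (by omega) hL3
  simp only [Nat.add_sub_cancel, Nat.sub_zero, pow_zero, pow_one, one_mul] at E10 E11 E12 E20 E21 E22 E30 E31 E32
  have hsub0 : m + 2 - 0 = m + 2 := rfl
  have hsub1 : m + 2 - 1 = m + 1 := rfl
  rw [hsub1] at E11 E21 E31
  set T1 : ℂ := ((1/M : ℝ) : ℂ) with hT1def
  set T2 : ℂ := ((1/(M+1) : ℝ) : ℂ) with hT2def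
  set T3 : ℂ := ((1/(M+2) : ℝ) : ℂ) with hT3def
  -- quadratics at the three points
  have Q1 : (c 0 + T1 * d 0) * (c 2 + T1 * d 2) = (c 1 + T1 * d 1)^2 := by
    rw [E10, E12, E11]
    have h : ((1 - (1/N1))^(m+2)) * ((1/N1)^2 * (1-(1/N1))^m) = ((1/N1) * (1-(1/N1))^(m+1))^2 := by ring
    exact_mod_cast congrArg Complex.ofReal h
  have Q2 : (c 0 + T2 * d 0) * (c 2 + T2 * d 2) = (c 1 + T2 * d 1)^2 := by
    rw [E20, E22, E21]
    have h : ((1 - (1/N2))^(m+2)) * ((1/N2)^2 * (1-(1/N2))^m) = ((1/N2) * (1-(1/N2))^(m+1))^2 := by ring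
    exact_mod_cast congrArg Complex.ofReal h
  have Q3 : (c 0 + T3 * d 0) * (c 2 + T3 * d 2) = (c 1 + T3 * d 1)^2 := by
    rw [E30, E32, E31]
    have h : ((1 - (1/N3))^(m+2)) * ((1/N3)^2 * (1-(1/N3))^m) = ((1/N3) * (1-(1/N3))^(m+1))^2 := by ring
    exact_mod_cast congrArg Complex.ofReal h
  -- distinctness of the T's
  have ht12 : (1/M : ℝ) ≠ 1/(M+1) := by
    have : (1/(M+1) : ℝ) < 1/M := by
      apply one_div_lt_one_div_of_lt hM0; linarith
    exact ne_of_gt this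
  have ht23 : (1/(M+1) : ℝ) ≠ 1/(M+2) := by
    have : (1/(M+2) : ℝ) < 1/(M+1) := by
      apply one_div_lt_one_div_of_lt (by linarith); linarith
    exact ne_of_gt this
  have ht13 : (1/M : ℝ) ≠ 1/(M+2) := by
    have : (1/(M+2) : ℝ) < 1/M := by
      apply one_div_lt_one_div_of_lt hM0; linarith
    exact ne_of_gt this
  have hT12 : T1 ≠ T2 := fun h => ht12 (Complex.ofReal_inj.1 h)
  have hT23 : T2 ≠ T3 := fun h => ht23 (Complex.ofReal_inj.1 h)
  have hT13 : T1 ≠ T3 := fun h => ht13 (Complex.ofReal_inj.1 h)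
  -- coefficient extraction
  have h12 : (c 0 * d 2 + d 0 * c 2 - 2 * c 1 * d 1)
      + (d 0 * d 2 - d 1^2) * (T1 + T2) = 0 := by
    have hsubQ : (T1 - T2) * ((c 0 * d 2 + d 0 * c 2 - 2 * c 1 * d 1)
        + (d 0 * d 2 - d 1^2) * (T1 + T2)) = 0 := by
      linear_combination Q1 - Q2
    exact (mul_eq_zero.1 hsubQ).resolve_left (sub_ne_zero.2 hT12)
  have h23 : (c 0 * d 2 + d 0 * c 2 - 2 * c 1 * d 1)
      + (d 0 * d 2 - d 1^2) * (T2 + T3) = 0 := by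
    have hsubQ : (T2 - T3) * ((c 0 * d 2 + d 0 * c 2 - 2 * c 1 * d 1)
        + (d 0 * d 2 - d 1^2) * (T2 + T3)) = 0 := by
      linear_combination Q2 - Q3
    exact (mul_eq_zero.1 hsubQ).resolve_left (sub_ne_zero.2 hT23)
  have hq2 : d 0 * d 2 - d 1^2 = 0 := by
    have h13 : (d 0 * d 2 - d 1^2) * (T1 - T3) = 0 := by linear_combination h12 - h23
    exact (mul_eq_zero.1 h13).resolve_right (sub_ne_zero.2 hT13)
  have hq1 : c 0 * d 2 + d 0 * c 2 - 2 * c 1 * d 1 = 0 := by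
    linear_combination h12 - (T1 + T2) * hq2
  have hq0 : c 0 * c 2 - c 1^2 = 0 := by
    linear_combination Q1 - T1 * hq1 - T1^2 * hq2
  -- the Wronskian identities
  have hX : (c 0 * d 2 - c 2 * d 0)^2 = 0 := by
    linear_combination (c 0 * d 2 + c 2 * d 0 + 2 * c 1 * d 1) * hq1
      - 4 * (d 0 * d 2) * hq0 - 4 * (c 1^2) * hq2
  have hX0 : c 0 * d 2 - c 2 * d 0 = 0 := by
    exact sq_eq_zero_iff.1 hX
  have hA : c 0 * d 2 - c 1 * d 1 = 0 := by
    linear_combination (1/2 : ℂ) * hq1 + (1/2 : ℂ) * hX0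
  have hB : c 2 * d 0 - c 1 * d 1 = 0 := by
    linear_combination (1/2 : ℂ) * hq1 - (1/2 : ℂ) * hX0
  have hWW' : (c 1 * d 0 - c 0 * d 1) * (c 1 * d 2 - c 2 * d 1) = 0 := by
    linear_combination c 1^2 * hq2 - c 1 * d 1 * hB - c 1 * d 1 * hA + d 1^2 * hq0
  -- in either case, (1/N1) = (1/N2)
  have hs12 : (1/N1) = (1/N2) := by
    rcases mul_eq_zero.1 hWW' with hW | hW'
    · -- use k = 0, 1
      have hc : (((1/N1) * (1-(1/N1))^(m+1) : ℝ) : ℂ) * (((1-(1/N2))^(m+2) : ℝ) : ℂ)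
          = (((1-(1/N1))^(m+2) : ℝ) : ℂ) * (((1/N2) * (1-(1/N2))^(m+1) : ℝ) : ℂ) := by
        rw [← E11, ← E20, ← E10, ← E21]
        linear_combination (T2 - T1) * hW
      have hcr : ((1/N1) * (1-(1/N1))^(m+1)) * ((1-(1/N2))^(m+2))
          = ((1-(1/N1))^(m+2)) * ((1/N2) * (1-(1/N2))^(m+1)) := by exact_mod_cast hc
      have hK : (0:ℝ) < (1-(1/N1))^(m+1) * (1-(1/N2))^(m+1) :=
        mul_pos (pow_pos (by linarith) _) (pow_pos (by linarith) _)
      have heq2 : ((1/N1) * (1-(1/N2))) * ((1-(1/N1))^(m+1) * (1-(1/N2))^(m+1))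
          = ((1/N2) * (1-(1/N1))) * ((1-(1/N1))^(m+1) * (1-(1/N2))^(m+1)) := by
        linear_combination hcr
      have hcancel := mul_right_cancel₀ (ne_of_gt hK) heq2
      linear_combination hcancel
    · -- use k = 1, 2
      have hc : (((1/N1)^2 * (1-(1/N1))^m : ℝ) : ℂ) * (((1/N2) * (1-(1/N2))^(m+1) : ℝ) : ℂ)
          = (((1/N1) * (1-(1/N1))^(m+1) : ℝ) : ℂ) * (((1/N2)^2 * (1-(1/N2))^m : ℝ) : ℂ) := by
        rw [← E12, ← E21, ← E11, ← E22]
        linear_combination (T1 - T2) * hW'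
      have hcr : ((1/N1)^2 * (1-(1/N1))^m) * ((1/N2) * (1-(1/N2))^(m+1))
          = ((1/N1) * (1-(1/N1))^(m+1)) * ((1/N2)^2 * (1-(1/N2))^m) := by exact_mod_cast hc
      have hK : (0:ℝ) < ((1/N1) * (1/N2)) * ((1-(1/N1))^m * (1-(1/N2))^m) :=
        mul_pos (mul_pos hs1pos hs2pos)
          (mul_pos (pow_pos (by linarith) _) (pow_pos (by linarith) _))
      have heq2 : ((1/N1) * (1-(1/N2))) * (((1/N1) * (1/N2)) * ((1-(1/N1))^m * (1-(1/N2))^m))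
          = ((1/N2) * (1-(1/N1))) * (((1/N1) * (1/N2)) * ((1-(1/N1))^m * (1-(1/N2))^m)) := by
        linear_combination hcr
      have hcancel := mul_right_cancel₀ (ne_of_gt hK) heq2
      linear_combination hcancel
  -- hence L DD = 0
  have hpieq : piM N1 = piM N2 := by
    unfold piM
    rw [show (1/N1 : ℝ) = 1/N2 from hs12]
  have hLL : L (piM M) = L (piM (M+1)) := by rw [hL1, hL2, hpieq]
  have hDdiff : piM M - piM (M+1) = ((1/M - 1/(M+1) : ℝ) : ℂ) • DD := by
    rw [hpiM M, hpiM (M+1)]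
    push_cast
    module
  have hLD : L DD = 0 := by
    have h0 : ((1/M - 1/(M+1) : ℝ) : ℂ) • L DD = 0 := by
      rw [← LinearMap.map_smul, ← hDdiff, map_sub, hLL, sub_self]
    rcases smul_eq_zero.1 h0 with h | h
    · exfalso
      have : (1/M - 1/(M+1) : ℝ) = 0 := by exact_mod_cast h
      exact ht12 (by linarith)
    · exact h
  have hket1 : L ket1 = tensPow (piM N1) (m+2) := by
    have hLP0 : L P0 = L (piM M) := by
      rw [hpiM M, map_add, LinearMap.map_smul, hLD, smul_zero, add_zero]
    rw [hketP, map_add, hLD, add_zero, hLP0, hL1]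
  -- final numeric contradiction
  rw [hket1] at hdist
  -- compute the trace distance
  set v : Fin 2 → ℝ := ![1 - (1/N1), (1/N1)] with hvdef
  set w : Fin 2 → ℝ := ![0, 1] with hwdef
  have hXd : tensPow (piM N1) (m+2) - tensPow ket1 (m+2)
      = Matrix.diagonal fun y : Fin (m+2) → Fin 2 =>
          (((∏ i, v (y i)) - (∏ i, w (y i)) : ℝ) : ℂ) := by
    rw [piM_eq_diag N1, ket1_eq_diag, tensPow_diagonal, tensPow_diagonal, Matrix.diagonal_sub]
    refine congrArg Matrix.diagonal ?_
    funext y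
    try simp only [Pi.sub_apply]
    push_cast
    rfl
  have htn : traceNorm (tensPow (piM N1) (m+2) - tensPow ket1 (m+2))
      = ∑ y : Fin (m+2) → Fin 2, |(∏ i, v (y i)) - (∏ i, w (y i))| := by
    rw [hXd, traceNorm_diagonal_real]
  -- evaluate the sum
  have hvnn : ∀ j, 0 ≤ v j := by
    intro j
    fin_cases j
    · show (0:ℝ) ≤ 1 - (1/N1); linarith
    · show (0:ℝ) ≤ (1/N1); linarith
  have hPnn : ∀ y : Fin (m+2) → Fin 2, 0 ≤ ∏ i, v (y i) :=
    fun y => Finset.prod_nonneg fun i _ => hvnn _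
  set one : Fin (m+2) → Fin 2 := fun _ => 1 with honedef
  have hQone : (∏ i, w (one i)) = 1 := by
    simp [honedef, hwdef]
  have hQzero : ∀ y : Fin (m+2) → Fin 2, y ≠ one → (∏ i, w (y i)) = 0 := by
    intro y hy
    obtain ⟨i, hi⟩ := Function.ne_iff.1 hy
    have h0 : y i = 0 := by
      have hall : ∀ a : Fin 2, a ≠ 1 → a = 0 := by decide
      exact hall _ hi
    exact Finset.prod_eq_zero (Finset.mem_univ i) (by rw [h0]; rfl)
  have hPone : (∏ i, v (one i)) = (1/N1) ^ (m+2) := by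
    simp [honedef, hvdef]
  have hPsum : (∑ y : Fin (m+2) → Fin 2, ∏ i, v (y i)) = 1 := by
    rw [← Fintype.sum_pow v (m+2)]
    have : (∑ j, v j) = 1 := by
      rw [Fin.sum_univ_two]
      show (1 - (1/N1)) + (1/N1) = 1
      ring
    rw [this, one_pow]
  have hsn : (1/N1) ^ (m+2) ≤ 1/4 := by
    calc (1/N1) ^ (m+2) ≤ (1/2:ℝ) ^ (m+2) := pow_le_pow_left₀ (le_of_lt hs1pos) hs1le _
    _ ≤ (1/2:ℝ) ^ 2 := pow_le_pow_of_le_one (by norm_num) (by norm_num) (by omega)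
    _ = 1/4 := by norm_num
  have hsum : (∑ y : Fin (m+2) → Fin 2, |(∏ i, v (y i)) - (∏ i, w (y i))|)
      = 2 * (1 - (1/N1)^(m+2)) := by
    rw [← Finset.add_sum_erase _ _ (Finset.mem_univ one)]
    have hrest : (∑ y ∈ Finset.univ.erase one, |(∏ i, v (y i)) - (∏ i, w (y i))|)
        = ∑ y ∈ Finset.univ.erase one, ∏ i, v (y i) := by
      apply Finset.sum_congr rfl
      intro y hy
      rw [hQzero y (Finset.ne_of_mem_erase hy), sub_zero, abs_of_nonneg (hPnn y)]
    rw [hrest, hQone, hPone]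
    have herase : (∑ y ∈ Finset.univ.erase one, ∏ i, v (y i)) = 1 - (1/N1)^(m+2) := by
      rw [Finset.sum_erase_eq_sub (Finset.mem_univ one), hPsum, hPone]
    rw [herase, abs_of_nonpos (by linarith)]
    ring
  have hfinal : traceDist (tensPow (piM N1) (m+2)) (tensPow ket1 (m+2)) = 1 - (1/N1)^(m+2) := by
    unfold traceDist
    rw [htn, hsum]
    ring
  rw [hfinal] at hdist
  obtain ⟨hε0, hεlt⟩ := hε
  linarith
end
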